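/- The number of A-orbits on the set Irr(G) of irreducible complex characters of G equals the number of A-orbits on the set Cl(G) of conjugacy classes of G. -/

import Mathlib

noncomputable section
open CategoryTheory CategoryTheory.Limits Module

namespace BrauerAux

variable {G : Type} [Group G] [Fintype G]

/-- Restriction of a representation to an invariant subspace. -/
def subRep {W : Type} [AddCommGroup W] [Module ℂ W] (ρ : Representation ℂ G W)
    (p : Submodule ℂ W) (hp : ∀ g : G, ∀ x ∈ p, ρ g x ∈ p) : Representation ℂ G p where
  toFun g := (ρ g).restrict (fun x hx => hp g x hx)
  map_one' := by ext x; simp [LinearMap.restrict_apply]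
  map_mul' g h := by ext x; simp [LinearMap.restrict_apply]

@[simp] lemma subRep_apply {W : Type} [AddCommGroup W] [Module ℂ W] (ρ : Representation ℂ G W)
    (p : Submodule ℂ W) (hp) (g : G) (x : p) :
    ((subRep ρ p hp g x : p) : W) = ρ g (x : W) := rfl

/-- A representation is irreducible if it is nonzero and has no nontrivial invariant
subspaces. -/
def IrredRep {W : Type} [AddCommGroup W] [Module ℂ W] (ρ : Representation ℂ G W) : Prop :=
  (∃ w : W, w ≠ 0) ∧
    ∀ p : Submodule ℂ W, (∀ g : G, ∀ x ∈ p, ρ g x ∈ p) → p = ⊥ ∨ p = ⊤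

lemma hom_comm_apply {X Y : FDRep ℂ G} (f : X ⟶ Y) (g : G) (x : X) :
    f.hom (X.ρ g x) = Y.ρ g (f.hom x) :=
  LinearMap.ext_iff.mp (congrArg (fun φ => φ.hom.hom) (f.comm g)) x

lemma hom_ext {X Y : FDRep ℂ G} {f g : X ⟶ Y} (h : ∀ x : X, f.hom x = g.hom x) : f = g := by
  apply Action.Hom.ext
  ext x
  exact h x

@[simp] lemma zero_hom_apply {X Y : FDRep ℂ G} (x : X) : (0 : X ⟶ Y).hom x = 0 := rfl

lemma fdRep_hom_injective_of_mono {X Y : FDRep ℂ G} (f : X ⟶ Y) [Mono f] :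
    Function.Injective f.hom := by
  rw [← LinearMap.ker_eq_bot]
  by_contra hker
  have hinv : ∀ g : G, ∀ x ∈ LinearMap.ker f.hom.hom.hom,
      X.ρ g x ∈ LinearMap.ker f.hom.hom.hom := by
    intro g x hx
    simp only [LinearMap.mem_ker] at hx ⊢
    exact (hom_comm_apply f g x).trans (by rw [show f.hom x = 0 from hx, map_zero])
  set K := FDRep.of (subRep X.ρ _ hinv) with hK
  let k : K ⟶ X := ⟨FGModuleCat.ofHom (LinearMap.ker f.hom.hom.hom).subtype, fun g => rfl⟩
  have hkf : k ≫ f = 0 ≫ f := by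
    apply hom_ext
    rintro ⟨x, hx⟩
    rw [zero_comp]
    exact hx
  have hk0 : k = 0 := (cancel_mono f).mp hkf
  obtain ⟨x, hx⟩ := Submodule.exists_mem_ne_zero_of_ne_bot hker
  exact hx.2 (congrFun (congrArg (fun (l : K ⟶ X) => (l.hom : K → X)) hk0) ⟨x, hx.1⟩)

lemma isIso_of_bijective {X Y : FDRep ℂ G} (f : X ⟶ Y) (hf : Function.Bijective f.hom) :
    IsIso f := by
  let e : X ≃ₗ[ℂ] Y := LinearEquiv.ofBijective f.hom.hom.hom hf
  have he : ∀ x : X, e x = f.hom x := fun _ => rfl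
  refine ⟨⟨⟨FGModuleCat.ofHom (e.symm : Y →ₗ[ℂ] X), fun g => ?_⟩, ?_, ?_⟩⟩
  · ext y
    apply hf.1
    show f.hom (e.symm (Y.ρ g y)) = f.hom (X.ρ g (e.symm y))
    rw [hom_comm_apply, ← he, ← he, e.apply_symm_apply, e.apply_symm_apply]
  · apply hom_ext; intro x
    show e.symm (f.hom x) = x
    rw [← he, e.symm_apply_apply]
  · apply hom_ext; intro y
    show f.hom (e.symm y) = y
    rw [← he, e.apply_symm_apply]

lemma mono_of_injective {X Y : FDRep ℂ G} (f : X ⟶ Y) (hf : Function.Injective f.hom) :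
    Mono f := by
  constructor
  intro Z a b hab
  apply hom_ext
  intro z
  apply hf
  exact congrFun (congrArg (fun (l : Z ⟶ Y) => (l.hom : Z → Y)) hab) z

/-- Bridge A : an irreducible representation gives a simple object of `FDRep`. -/
lemma simple_of_irredRep {W : Type} [AddCommGroup W] [Module ℂ W] [FiniteDimensional ℂ W]
    (ρ : Representation ℂ G W) (h : IrredRep ρ) : Simple (FDRep.of ρ) := by
  constructor
  intro Y f hm
  constructor
  · intro hiso h0
    obtain ⟨w, hw⟩ := h.1
    obtain ⟨ginv, -, hgf⟩ := hiso.out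
    rw [h0, comp_zero] at hgf
    have hid : (𝟙 (FDRep.of ρ) : FDRep.of ρ ⟶ FDRep.of ρ) = 0 := hgf.symm
    apply hw
    have := congrFun (congrArg (fun (l : FDRep.of ρ ⟶ FDRep.of ρ) =>
      (l.hom : FDRep.of ρ → FDRep.of ρ)) hid) w
    exact this
  · intro hf0
    have hinj : Function.Injective f.hom := fdRep_hom_injective_of_mono f
    have hinv : ∀ g : G, ∀ x ∈ LinearMap.range f.hom.hom.hom,
        ρ g x ∈ LinearMap.range f.hom.hom.hom := by
      rintro g x ⟨y, rfl⟩
      exact ⟨Y.ρ g y, hom_comm_apply f g y⟩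
    rcases h.2 _ hinv with hbot | htop
    · exfalso
      apply hf0
      apply hom_ext
      intro y
      have : f.hom y ∈ LinearMap.range f.hom.hom.hom := ⟨y, rfl⟩
      rw [hbot] at this
      exact (Submodule.mem_bot ℂ).mp this
    · exact isIso_of_bijective f ⟨hinj, LinearMap.range_eq_top.mp htop⟩

/-- Bridge B : a simple object of `FDRep` is an irreducible representation. -/
lemma irredRep_of_simple (V : FDRep ℂ G) [Simple V] : IrredRep V.ρ := by
  constructor
  · by_contra hno
    push_neg at hno
    have : (𝟙 V : V ⟶ V) = 0 := by
      apply hom_ext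
      intro x
      exact hno x
    exact id_nonzero V this
  · intro p hp
    by_contra hcon
    push_neg at hcon
    obtain ⟨hpbot, hptop⟩ := hcon
    let K := FDRep.of (subRep V.ρ p hp)
    let k : K ⟶ V := ⟨FGModuleCat.ofHom p.subtype, fun g => rfl⟩
    have : Mono k := mono_of_injective k (Subtype.val_injective)
    have hk0 : k ≠ 0 := by
      obtain ⟨x, hx⟩ := Submodule.exists_mem_ne_zero_of_ne_bot hpbot
      intro h0
      exact hx.2 (congrFun (congrArg (fun (l : K ⟶ V) => (l.hom : K → V)) h0) ⟨x, hx.1⟩)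
    have hiso : IsIso k := (Simple.mono_isIso_iff_nonzero k).mpr hk0
    apply hptop
    rw [Submodule.eq_top_iff']
    intro v
    have hkv : k.hom ((inv k).hom v) = v :=
      congrFun (congrArg (fun (l : V ⟶ V) => (l.hom : V → V)) (IsIso.inv_hom_id k)) v
    rw [← hkv]
    exact ((inv k).hom v).2

namespace BrauerAux2
variable {G : Type} [Group G] [Fintype G]

/-- The endomorphism `∑ g, f g • ρ g` attached to a function `f : G → ℂ`. -/
def Tmap (f : G → ℂ) (V : FDRep ℂ G) : V →ₗ[ℂ] V := ∑ g : G, f g • (V.ρ g : V →ₗ[ℂ] V)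

lemma Tmap_comm (f : G → ℂ) (hf : ∀ g h : G, f (h * g * h⁻¹) = f g) (V : FDRep ℂ G) (h : G) :
    Tmap f V ∘ₗ V.ρ h = V.ρ h ∘ₗ Tmap f V := by
  apply LinearMap.ext; intro v
  have lhs : (Tmap f V ∘ₗ V.ρ h) v = ∑ g : G, f g • V.ρ (g * h) v := by
    simp [Tmap, LinearMap.sum_apply, map_mul]
  have rhs : (V.ρ h ∘ₗ Tmap f V) v = ∑ g : G, f g • V.ρ (h * g) v := by
    simp [Tmap, LinearMap.sum_apply, map_mul, map_sum]
  rw [lhs, rhs]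
  refine Fintype.sum_bijective (fun g => h⁻¹ * g * h)
    (Function.bijective_iff_has_inverse.mpr
      ⟨fun g => h * g * h⁻¹, fun g => by group, fun g => by group⟩) _ _ (fun g => ?_)
  have h1 : f (h⁻¹ * g * h) = f g := by simpa using hf g h⁻¹
  rw [h1]
  congr 2
  group

lemma trace_Tmap (f : G → ℂ) (V : FDRep ℂ G) :
    LinearMap.trace ℂ V (Tmap f V) = ∑ g : G, f g * V.character g := by
  unfold Tmap
  rw [map_sum]
  refine Finset.sum_congr rfl (fun g _ => ?_)
  rw [map_smul]
  simp [FDRep.character, smul_eq_mul]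

lemma Tmap_eq_zero (f : G → ℂ) (hf : ∀ g h : G, f (h * g * h⁻¹) = f g) (V : FDRep ℂ G)
    [Simple V] (horth : ∑ g : G, f g * V.character g = 0) : Tmap f V = 0 := by
  let η : V ⟶ V := ⟨FGModuleCat.ofHom (Tmap f V), fun h => by
    ext v
    exact congrFun (congrArg (fun (l : _ →ₗ[ℂ] _) => ⇑l) (Tmap_comm f hf V h)) v⟩
  obtain ⟨c, hc⟩ := endomorphism_simple_eq_smul_id ℂ η
  have hhom : c • (𝟙 V : V ⟶ V).hom = η.hom := by rw [← hc]; simp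
  have hVne : ∃ w : V, w ≠ 0 := by
    by_contra hno
    push_neg at hno
    refine id_nonzero V ?_
    apply Action.Hom.ext
    ext x
    exact hno x
  have : Nontrivial V := by
    obtain ⟨w, hw⟩ := hVne
    exact nontrivial_of_ne w 0 hw
  have hT : Tmap f V = c • LinearMap.id := by
    rw [show Tmap f V = ConcreteCategory.hom η.hom from rfl, ← hhom]
    rfl
  have htr : LinearMap.trace ℂ V (Tmap f V) = c * (finrank ℂ V : ℂ) := by
    rw [hT, map_smul, LinearMap.trace_id]
    simp [smul_eq_mul]
  rw [trace_Tmap, horth] at htr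
  have hfr : (finrank ℂ V : ℂ) ≠ 0 := Nat.cast_ne_zero.mpr finrank_pos.ne'
  rcases mul_eq_zero.mp htr.symm with hc0 | hN
  · rw [hT, hc0, zero_smul]
  · exact absurd hN hfr

section Vanishing
variable {G : Type} [Group G] [Fintype G]

local notation "R" => MonoidAlgebra ℂ G

noncomputable instance : Module.Finite ℂ (MonoidAlgebra ℂ G) :=
  Module.Finite.equiv ((Finsupp.linearEquivFunOnFinite ℂ ℂ G).symm.trans (MonoidAlgebra.coeffLinearEquiv ℂ).symm)

noncomputable instance (S : Submodule R R) : FiniteDimensional ℂ S :=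
  FiniteDimensional.of_injective (S.subtype.restrictScalars ℂ) Subtype.val_injective

/-- The representation of `G` on a (left) submodule of its group algebra. -/
noncomputable def modRep (S : Submodule R R) : Representation ℂ G S where
  toFun g :=
    { toFun := fun s => (MonoidAlgebra.single g (1 : ℂ) : R) • s
      map_add' := fun a b => smul_add _ a b
      map_smul' := fun c a => by rw [RingHom.id_apply]; exact smul_comm _ c a }
  map_one' := by
    apply LinearMap.ext; intro s
    show (MonoidAlgebra.single (1:G) (1:ℂ) : R) • s = s
    rw [← MonoidAlgebra.one_def, one_smul]
  map_mul' g h := by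
    apply LinearMap.ext; intro s
    simp only [LinearMap.coe_mk, AddHom.coe_mk, Module.End.mul_apply]
    rw [← mul_smul, MonoidAlgebra.single_mul_single, one_mul]

lemma modRep_irred (S : Submodule R R) (hS : IsSimpleModule R S) : IrredRep (modRep S) := by
  constructor
  · haveI := hS.nontrivial
    obtain ⟨s, hs⟩ := exists_ne (0 : S)
    exact ⟨s, hs⟩
  · intro p hp
    let q : Submodule R S :=
      { carrier := (p : Set S)
        add_mem' := fun ha hb => p.add_mem ha hb
        zero_mem' := p.zero_mem
        smul_mem' := by
          intro r s hs
          have key : ∀ c : ℂ, ∀ g : G, (MonoidAlgebra.single g c : R) • s ∈ p := by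
            intro c g
            have : (MonoidAlgebra.single g c : R) = c • MonoidAlgebra.single g 1 := by
              rw [MonoidAlgebra.smul_single', mul_one]
            rw [this, smul_assoc]
            exact p.smul_mem c (hp g s hs)
          induction r using MonoidAlgebra.induction_linear with
          | zero => rw [zero_smul]; exact p.zero_mem
          | add a b ha hb => rw [add_smul]; exact p.add_mem ha hb
          | single g c => exact key c g }
    rcases eq_bot_or_eq_top q with hq | hq
    · left
      rw [Submodule.eq_bot_iff]
      intro s hs
      have : s ∈ q := hs
      rw [hq] at this
      simpa using this
    · right
      rw [Submodule.eq_top_iff']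
      intro s
      have : s ∈ (⊤ : Submodule R S) := trivial
      rw [← hq] at this
      exact this

lemma Tmap_modRep_apply (f : G → ℂ) (S : Submodule R R) (s : S) :
    Tmap f (FDRep.of (modRep S)) s = (∑ g : G, MonoidAlgebra.single g (f g) : R) • s := by
  rw [Tmap, LinearMap.sum_apply, Finset.sum_smul]
  refine Finset.sum_congr rfl (fun g _ => ?_)
  rw [LinearMap.smul_apply]
  show f g • ((MonoidAlgebra.single g (1:ℂ) : R) • s) = _
  rw [← smul_assoc, MonoidAlgebra.smul_single', mul_one]

/-- A class function orthogonal to all irreducible characters vanishes. -/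
lemma classfun_eq_zero (f : G → ℂ) (hf : ∀ g h : G, f (h * g * h⁻¹) = f g)
    (horth : ∀ V : FDRep ℂ G, Simple V → ∑ g : G, f g * V.character g = 0) : f = 0 := by
  set x : R := ∑ g : G, MonoidAlgebra.single g (f g) with hx
  have hsimple : ∀ S : Submodule R R, IsSimpleModule R S → ∀ s : S, x • s = 0 := by
    intro S hS s
    haveI : Simple (FDRep.of (modRep S)) := simple_of_irredRep _ (modRep_irred S hS)
    have h0 : Tmap f (FDRep.of (modRep S)) = 0 :=
      Tmap_eq_zero f hf _ (horth _ inferInstance)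
    have h1 := Tmap_modRep_apply f S s
    rw [h0] at h1
    exact h1.symm.trans (LinearMap.zero_apply s)
  have hx0 : x = 0 := by
    have h1 : (1 : R) ∈ (⊤ : Submodule R R) := trivial
    rw [← IsSemisimpleModule.sSup_simples_eq_top R R, sSup_eq_iSup'] at h1
    have hind : x * (1 : R) = 0 := by
      refine Submodule.iSup_induction _ h1 (motive := fun m => x * m = 0) ?_ (by simp) ?_
      · rintro ⟨S, hS⟩ m hm
        have := hsimple S hS ⟨m, hm⟩
        have h2 := congrArg (Subtype.val) this
        simpa [smul_eq_mul] using h2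
      · intro a b ha hb
        rw [mul_add, ha, hb, add_zero]
    simpa using hind
  funext g
  rw [hx] at hx0
  have hx0' : (∑ g : G, Finsupp.single g (f g) : G →₀ ℂ) = 0 := by
    simpa [MonoidAlgebra.coeff_sum, MonoidAlgebra.coeff_single] using congrArg MonoidAlgebra.coeff hx0
  have hg := DFunLike.congr_fun hx0' g
  classical
  simpa [Finsupp.finset_sum_apply, Finsupp.single_apply, Finset.sum_ite_eq'] using hg

end Vanishing

section Characters
open scoped Classical
variable {G : Type} [Group G] [Fintype G]

noncomputable instance : Invertible ((Fintype.card G : ℂ)) :=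
  invertibleOfNonzero (by exact_mod_cast Fintype.card_ne_zero)

lemma orth_sum (V W : FDRep ℂ G) [Simple V] [Simple W] :
    ∑ g : G, V.character g * W.character g⁻¹
      = if Nonempty (V ≅ W) then (Fintype.card G : ℂ) else 0 := by
  have hne : (Nat.card G : ℂ) ≠ 0 := by exact_mod_cast Nat.card_pos.ne'
  letI : Invertible ((Nat.card G : ℂ)) := invertibleOfNonzero hne
  have h := FDRep.char_orthonormal (k := ℂ) (G := G) V W
  rw [inv_mul_eq_iff_eq_mul₀ hne] at h
  have h' : ∑ g : G, V.character g * W.character g⁻¹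
      = (Fintype.card G : ℂ) • (if Nonempty (V ≅ W) then (1 : ℂ) else 0) := by
    rw [h, Nat.card_eq_fintype_card, smul_eq_mul]
  rw [h']
  split <;> simp [smul_eq_mul]

lemma char_eq_iff (V W : FDRep ℂ G) [Simple V] [Simple W] :
    V.character = W.character ↔ Nonempty (V ≅ W) := by
  constructor
  · intro h
    by_contra hn
    have h1 := orth_sum V W
    rw [if_neg hn] at h1
    have h2 := orth_sum V V
    rw [if_pos ⟨Iso.refl V⟩] at h2
    rw [h] at h2 h1
    rw [h1] at h2
    exact absurd h2.symm (by exact_mod_cast Fintype.card_ne_zero)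
  · exact fun ⟨i⟩ => FDRep.char_iso i

/-- The set of irreducible characters. -/
def Irr (G : Type) [Group G] [Fintype G] : Set (G → ℂ) :=
  {χ | ∃ V : FDRep ℂ G, Simple V ∧ χ = V.character}

lemma pair_orth {χ ψ : G → ℂ} (hχ : χ ∈ Irr G) (hψ : ψ ∈ Irr G) :
    ∑ g : G, χ g * ψ g⁻¹ = if χ = ψ then (Fintype.card G : ℂ) else 0 := by
  obtain ⟨V, hV, rfl⟩ := hχ
  obtain ⟨W, hW, rfl⟩ := hψ
  rw [orth_sum V W]
  congr 1
  exact propext (char_eq_iff V W).symm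

lemma irr_classfun {χ : G → ℂ} (hχ : χ ∈ Irr G) : ∀ g h : G, χ (h * g * h⁻¹) = χ g := by
  obtain ⟨V, hV, rfl⟩ := hχ
  intro g h
  exact FDRep.char_conj V g h

lemma irr_nonempty : (Irr G).Nonempty := by
  refine ⟨(FDRep.of (Representation.trivial ℂ (G := G) (V := ℂ))).character,
    FDRep.of (Representation.trivial ℂ (G := G) (V := ℂ)), ?_, rfl⟩
  apply simple_of_irredRep
  exact ⟨⟨1, one_ne_zero⟩, fun p _ => eq_bot_or_eq_top p⟩

instance : Nonempty ↥(Irr G) := ⟨⟨_, irr_nonempty.choose_spec⟩⟩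

lemma irr_linIndep : LinearIndependent ℂ (fun χ : ↥(Irr G) => (χ : G → ℂ)) := by
  classical
  rw [linearIndependent_iff']
  intro s c hsum j hj
  have key : ∀ i : ↥(Irr G), ∑ g : G, (i : G → ℂ) g * (j : G → ℂ) g⁻¹
      = if i = j then (Fintype.card G : ℂ) else 0 := by
    intro i
    rw [pair_orth i.2 j.2]
    congr 1
    exact propext ⟨fun h => Subtype.ext h, fun h => by rw [h]⟩
  have hap := congrArg (fun u : G → ℂ => ∑ g : G, u g * (j : G → ℂ) g⁻¹) hsum
  simp only [Pi.zero_apply, zero_mul, Finset.sum_const_zero] at hap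
  have e1 : ∀ g : G, (∑ i ∈ s, c i • (i : G → ℂ)) g * (j : G → ℂ) g⁻¹
      = ∑ i ∈ s, c i * ((i : G → ℂ) g * (j : G → ℂ) g⁻¹) := by
    intro g
    rw [Finset.sum_apply, Finset.sum_mul]
    refine Finset.sum_congr rfl (fun i _ => ?_)
    simp [smul_eq_mul, mul_assoc]
  have hL : ∑ g : G, (∑ i ∈ s, c i • (i : G → ℂ)) g * (j : G → ℂ) g⁻¹
      = ∑ i ∈ s, c i * (if i = j then (Fintype.card G : ℂ) else 0) := by
    calc ∑ g : G, (∑ i ∈ s, c i • (i : G → ℂ)) g * (j : G → ℂ) g⁻¹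
        = ∑ g : G, ∑ i ∈ s, c i * ((i : G → ℂ) g * (j : G → ℂ) g⁻¹) :=
          Finset.sum_congr rfl (fun g _ => e1 g)
      _ = ∑ i ∈ s, ∑ g : G, c i * ((i : G → ℂ) g * (j : G → ℂ) g⁻¹) := Finset.sum_comm
      _ = ∑ i ∈ s, c i * ∑ g : G, (i : G → ℂ) g * (j : G → ℂ) g⁻¹ := by
          refine Finset.sum_congr rfl (fun i _ => ?_); rw [Finset.mul_sum]
      _ = ∑ i ∈ s, c i * (if i = j then (Fintype.card G : ℂ) else 0) :=
          Finset.sum_congr rfl (fun i _ => by rw [key i])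
  rw [hL] at hap
  rw [Finset.sum_eq_single j (fun b _ hb => by rw [if_neg hb, mul_zero])
    (fun h => absurd hj h), if_pos rfl] at hap
  rcases mul_eq_zero.mp hap with h | h
  · exact h
  · exact absurd h (by exact_mod_cast Fintype.card_ne_zero)

lemma irr_finite : (Irr G).Finite := irr_linIndep.setFinite

noncomputable instance : Fintype ↥(Irr G) := irr_finite.fintype

noncomputable instance : Fintype (ConjClasses G) := Fintype.ofFinite _

/-- Lift a class function to the conjugacy classes. -/
noncomputable def liftCF (f : G → ℂ) (hf : ∀ g h : G, f (h * g * h⁻¹) = f g) :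
    ConjClasses G → ℂ :=
  Quotient.lift f (fun a b hab => by
    obtain ⟨c, hc⟩ := isConj_iff.mp hab
    rw [← hc]
    exact (hf a c).symm)

@[simp] lemma liftCF_mk (f : G → ℂ) (hf) (g : G) :
    liftCF f hf (ConjClasses.mk g) = f g := rfl

noncomputable def irrCF : ↥(Irr G) → (ConjClasses G → ℂ) :=
  fun χ => liftCF χ.1 (irr_classfun χ.2)

lemma irrCF_mk (χ : ↥(Irr G)) (g : G) : irrCF χ (ConjClasses.mk g) = (χ : G → ℂ) g := rfl

lemma irrCF_linIndep : LinearIndependent ℂ (irrCF (G := G)) := by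
  apply LinearIndependent.of_comp (LinearMap.funLeft ℂ ℂ ConjClasses.mk)
  have : (⇑(LinearMap.funLeft ℂ ℂ (ConjClasses.mk (α := G))) ∘ irrCF)
      = fun χ : ↥(Irr G) => (χ : G → ℂ) := rfl
  rw [this]
  exact irr_linIndep

noncomputable def pairMap : (ConjClasses G → ℂ) →ₗ[ℂ] (↥(Irr G) → ℂ) where
  toFun F := fun χ => ∑ g : G, F (ConjClasses.mk g) * (χ : G → ℂ) g
  map_add' F₁ F₂ := by
    funext χ
    simp [add_mul, Finset.sum_add_distrib]
  map_smul' c F := by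
    funext χ
    simp [Finset.mul_sum, smul_eq_mul, mul_assoc]

lemma pairMap_inj : Function.Injective (pairMap (G := G)) := by
  rw [← LinearMap.ker_eq_bot, LinearMap.ker_eq_bot']
  intro F hF
  set f : G → ℂ := fun g => F (ConjClasses.mk g) with hfdef
  have hcf : ∀ g h : G, f (h * g * h⁻¹) = f g := by
    intro g h
    have : ConjClasses.mk (h * g * h⁻¹) = ConjClasses.mk g := by
      rw [ConjClasses.mk_eq_mk_iff_isConj]
      exact (isConj_iff.mpr ⟨h, rfl⟩).symm
    simp only [hfdef, this]
  have horth : ∀ V : FDRep ℂ G, Simple V → ∑ g : G, f g * V.character g = 0 := by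
    intro V hV
    exact congrFun hF ⟨V.character, V, hV, rfl⟩
  have hf0 : f = 0 := classfun_eq_zero f hcf horth
  funext c
  obtain ⟨g, rfl⟩ := ConjClasses.mk_surjective c
  exact congrFun hf0 g

lemma card_irr_eq : Fintype.card ↥(Irr G) = Fintype.card (ConjClasses G) := by
  refine le_antisymm ?_ ?_
  · have := irrCF_linIndep (G := G) |>.fintype_card_le_finrank
    rwa [finrank_fintype_fun_eq_card] at this
  · have h := LinearMap.finrank_le_finrank_of_injective (pairMap_inj (G := G))
    rwa [finrank_fintype_fun_eq_card, finrank_fintype_fun_eq_card] at h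

noncomputable def bIrr : Basis ↥(Irr G) ℂ (ConjClasses G → ℂ) :=
  basisOfLinearIndependentOfCardEqFinrank irrCF_linIndep
    (by rw [card_irr_eq, finrank_fintype_fun_eq_card])

lemma bIrr_apply (χ : ↥(Irr G)) : bIrr χ = irrCF χ :=
  congrFun (coe_basisOfLinearIndependentOfCardEqFinrank _ _) χ

end Characters

section Twist
open scoped Classical
variable {G : Type} [Group G] [Fintype G]

/-- Twist of a representation by an automorphism. -/
noncomputable def twistFD (σ : MulAut G) (V : FDRep ℂ G) : FDRep ℂ G :=
  FDRep.of (V.ρ.comp (σ⁻¹ : MulAut G).toMonoidHom)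

lemma twistFD_char (σ : MulAut G) (V : FDRep ℂ G) :
    (twistFD σ V).character = fun g => V.character (σ⁻¹ g) := rfl

lemma twistFD_simple (σ : MulAut G) (V : FDRep ℂ G) [Simple V] : Simple (twistFD σ V) := by
  apply simple_of_irredRep
  obtain ⟨hne, hsub⟩ := irredRep_of_simple V
  refine ⟨hne, fun p hp => hsub p (fun g x hx => ?_)⟩
  have := hp (σ g) x hx
  simpa using this

lemma twist_mem (σ : MulAut G) {χ : G → ℂ} (hχ : χ ∈ Irr G) :
    (fun g => χ (σ⁻¹ g)) ∈ Irr G := by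
  obtain ⟨V, hV, rfl⟩ := hχ
  exact ⟨twistFD σ V, twistFD_simple σ V, rfl⟩

/-- Twist action on irreducible characters. -/
noncomputable def τ (σ : MulAut G) (χ : ↥(Irr G)) : ↥(Irr G) :=
  ⟨fun g => (χ : G → ℂ) (σ⁻¹ g), twist_mem σ χ.2⟩

/-- Induced map on conjugacy classes. -/
noncomputable def μ (σ : MulAut G) (c : ConjClasses G) : ConjClasses G :=
  ConjClasses.map (σ⁻¹ : MulAut G).toMonoidHom c

lemma funLeft_irrCF (σ : MulAut G) (χ : ↥(Irr G)) :
    LinearMap.funLeft ℂ ℂ (μ σ) (irrCF χ) = irrCF (τ σ χ) := by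
  funext c
  obtain ⟨g, rfl⟩ := ConjClasses.mk_surjective c
  rfl

lemma trace_funLeft_basisFun (π : ConjClasses G → ConjClasses G) :
    LinearMap.trace ℂ (ConjClasses G → ℂ) (LinearMap.funLeft ℂ ℂ π)
      = (Fintype.card {c : ConjClasses G // π c = c} : ℂ) := by
  rw [LinearMap.trace_eq_matrix_trace ℂ (Pi.basisFun ℂ (ConjClasses G))]
  have hdiag : ∀ c : ConjClasses G,
      (LinearMap.toMatrix (Pi.basisFun ℂ (ConjClasses G)) (Pi.basisFun ℂ (ConjClasses G))
        (LinearMap.funLeft ℂ ℂ π)) c c = if π c = c then (1 : ℂ) else 0 := by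
    intro c
    rw [LinearMap.toMatrix_apply, Pi.basisFun_repr, LinearMap.funLeft_apply,
      Pi.basisFun_apply, Pi.single_apply]
  rw [Matrix.trace]
  calc ∑ c : ConjClasses G, Matrix.diag _ c
      = ∑ c : ConjClasses G, if π c = c then (1 : ℂ) else 0 :=
        Finset.sum_congr rfl (fun c _ => hdiag c)
    _ = (Fintype.card {c : ConjClasses G // π c = c} : ℂ) := by
        rw [Finset.sum_boole, Fintype.card_subtype]

lemma trace_funLeft_bIrr (σ : MulAut G) :
    LinearMap.trace ℂ (ConjClasses G → ℂ) (LinearMap.funLeft ℂ ℂ (μ σ))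
      = (Fintype.card {χ : ↥(Irr G) // τ σ χ = χ} : ℂ) := by
  rw [LinearMap.trace_eq_matrix_trace ℂ (bIrr (G := G))]
  have hdiag : ∀ χ : ↥(Irr G),
      (LinearMap.toMatrix (bIrr (G := G)) (bIrr (G := G))
        (LinearMap.funLeft ℂ ℂ (μ σ))) χ χ = if τ σ χ = χ then (1 : ℂ) else 0 := by
    intro χ
    rw [LinearMap.toMatrix_apply, bIrr_apply, funLeft_irrCF, ← bIrr_apply, Basis.repr_self,
      Finsupp.single_apply]
  rw [Matrix.trace]
  calc ∑ χ : ↥(Irr G), Matrix.diag _ χ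
      = ∑ χ : ↥(Irr G), if τ σ χ = χ then (1 : ℂ) else 0 :=
        Finset.sum_congr rfl (fun χ _ => hdiag χ)
    _ = _ := by rw [Finset.sum_boole, Fintype.card_subtype]

/-- The key per-automorphism fixed point count equality. -/
lemma fixed_count (σ : MulAut G) :
    Fintype.card {χ : ↥(Irr G) // τ σ χ = χ}
      = Fintype.card {c : ConjClasses G // μ σ c = c} := by
  have h := (trace_funLeft_bIrr σ).symm.trans (trace_funLeft_basisFun (μ σ))
  exact_mod_cast h

end Twist

section Orbits
open scoped Classical
open MulAction
variable {G : Type} [Group G] [Fintype G] {A : Type*} [Group A]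

variable (φ : A →* MulAut G)

/-- Action of the range of `φ` on irreducible characters by twisting. -/
noncomputable def actIrr : MulAction ↥φ.range ↥(Irr G) where
  smul q χ := τ (q : MulAut G) χ
  one_smul χ := by
    apply Subtype.ext
    funext g
    show (χ : G → ℂ) (((1 : MulAut G))⁻¹ g) = (χ : G → ℂ) g
    simp
  mul_smul q₁ q₂ χ := by
    apply Subtype.ext
    funext g
    show (χ : G → ℂ) ((((q₁ : MulAut G) * (q₂ : MulAut G)))⁻¹ g) = _
    simp [mul_inv_rev]
    rfl

/-- Action of the range of `φ` on conjugacy classes. -/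
noncomputable def actCl : MulAction ↥φ.range (ConjClasses G) where
  smul q c := ConjClasses.map (q : MulAut G).toMonoidHom c
  one_smul c := by
    obtain ⟨g, rfl⟩ := ConjClasses.mk_surjective c
    rfl
  mul_smul q₁ q₂ c := by
    obtain ⟨g, rfl⟩ := ConjClasses.mk_surjective c
    rfl

lemma mapC_fixed_iff (σ : MulAut G) (c : ConjClasses G) :
    ConjClasses.map σ.toMonoidHom c = c ↔ μ σ c = c := by
  have hinv : ∀ d : ConjClasses G,
      ConjClasses.map σ.toMonoidHom (μ σ d) = d := by
    intro d
    obtain ⟨g, rfl⟩ := ConjClasses.mk_surjective d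
    show ConjClasses.mk (σ (σ⁻¹ g)) = ConjClasses.mk g
    simp
  have hinv' : ∀ d : ConjClasses G,
      μ σ (ConjClasses.map σ.toMonoidHom d) = d := by
    intro d
    obtain ⟨g, rfl⟩ := ConjClasses.mk_surjective d
    show ConjClasses.mk (σ⁻¹ (σ g)) = ConjClasses.mk g
    simp
  constructor
  · intro h
    conv_lhs => rw [← h]
    exact hinv' c
  · intro h
    conv_lhs => rw [← h]
    exact hinv c

/-- Equal numbers of orbits of the two actions. -/
lemma card_orbits_eq :
    letI := actIrr φ
    letI := actCl φ
    Nat.card (Quotient (orbitRel ↥φ.range ↥(Irr G)))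
      = Nat.card (Quotient (orbitRel ↥φ.range (ConjClasses G))) := by
  letI := actIrr φ
  letI := actCl φ
  letI : Fintype ↥φ.range := Fintype.ofFinite _
  letI : Fintype (Quotient (orbitRel ↥φ.range ↥(Irr G))) := Fintype.ofFinite _
  letI : Fintype (Quotient (orbitRel ↥φ.range (ConjClasses G))) := Fintype.ofFinite _
  letI : ∀ q : ↥φ.range, Fintype ↥(fixedBy ↥(Irr G) q) := fun q => Fintype.ofFinite _
  letI : ∀ q : ↥φ.range, Fintype ↥(fixedBy (ConjClasses G) q) := fun q => Fintype.ofFinite _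
  have hb1 := sum_card_fixedBy_eq_card_orbits_mul_card_group ↥φ.range ↥(Irr G)
  have hb2 := sum_card_fixedBy_eq_card_orbits_mul_card_group ↥φ.range (ConjClasses G)
  have hsums : (∑ q : ↥φ.range, Fintype.card ↥(fixedBy ↥(Irr G) q))
      = ∑ q : ↥φ.range, Fintype.card ↥(fixedBy (ConjClasses G) q) := by
    refine Finset.sum_congr rfl (fun q _ => ?_)
    have e1 : ↥(fixedBy ↥(Irr G) q) ≃ {χ : ↥(Irr G) // τ (q : MulAut G) χ = χ} :=
      Equiv.subtypeEquivRight (fun χ => Iff.rfl)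
    have e2 : ↥(fixedBy (ConjClasses G) q) ≃ {c : ConjClasses G // μ (q : MulAut G) c = c} :=
      Equiv.subtypeEquivRight (fun c => mapC_fixed_iff (q : MulAut G) c)
    rw [Fintype.card_congr e1, Fintype.card_congr e2, fixed_count]
  rw [hb1, hb2] at hsums
  rw [Nat.card_eq_fintype_card, Nat.card_eq_fintype_card]
  exact Nat.eq_of_mul_eq_mul_right Fintype.card_pos hsums

end Orbits

section Final
open scoped Classical
open MulAction
variable {G : Type} [Group G] [Fintype G] {A : Type*} [Group A] (φ : A →* MulAut G)

lemma inv_comp (a b : A) (g : G) : (φ b)⁻¹ ((φ a)⁻¹ g) = (φ (a * b))⁻¹ g := by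
  rw [map_mul, mul_inv_rev]
  rfl

def orbSetIrr (χ : ↥(Irr G)) : Set (G → ℂ) :=
  {ψ | ∃ a : A, ψ = fun g => (χ : G → ℂ) ((φ a)⁻¹ g)}

lemma self_mem_orbSetIrr (χ : ↥(Irr G)) : (χ : G → ℂ) ∈ orbSetIrr φ χ :=
  ⟨1, by funext g; simp⟩

lemma orbSetIrr_smul (a₀ : A) (χ : ↥(Irr G)) :
    orbSetIrr φ (τ (φ a₀) χ) = orbSetIrr φ χ := by
  ext ψ
  constructor
  · rintro ⟨a, rfl⟩
    refine ⟨a * a₀, ?_⟩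
    funext g
    show (χ : G → ℂ) ((φ a₀)⁻¹ ((φ a)⁻¹ g)) = (χ : G → ℂ) ((φ (a * a₀))⁻¹ g)
    rw [inv_comp]
  · rintro ⟨a, rfl⟩
    refine ⟨a * a₀⁻¹, ?_⟩
    funext g
    show (χ : G → ℂ) ((φ a)⁻¹ g) = (χ : G → ℂ) ((φ a₀)⁻¹ ((φ (a * a₀⁻¹))⁻¹ g))
    rw [inv_comp]
    congr 2
    group

lemma natcard_irr :
    Nat.card {O : Set (G → ℂ) | ∃ χ : G → ℂ, χ ∈ Irr G ∧
        O = {ψ : G → ℂ | ∃ a : A, ψ = fun g : G => χ ((φ a)⁻¹ g)}}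
      = Nat.card (Quotient (@orbitRel ↥φ.range ↥(Irr G) _ (actIrr φ))) := by
  letI := actIrr φ
  symm
  apply Nat.card_congr
  refine Equiv.ofBijective (Quotient.lift
    (fun χ : ↥(Irr G) =>
      (⟨orbSetIrr φ χ, ⟨χ.1, χ.2, rfl⟩⟩ :
        ↥{O : Set (G → ℂ) | ∃ χ : G → ℂ, χ ∈ Irr G ∧
          O = {ψ : G → ℂ | ∃ a : A, ψ = fun g : G => χ ((φ a)⁻¹ g)}})) ?_) ⟨?_, ?_⟩
  · -- well-defined
    intro χ₁ χ₂ hrel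
    obtain ⟨q, hq⟩ := MulAction.mem_orbit_iff.mp hrel
    obtain ⟨a₀, ha₀⟩ := q.2
    apply Subtype.ext
    show orbSetIrr φ χ₁ = orbSetIrr φ χ₂
    have hq' : τ (φ a₀) χ₂ = χ₁ := by
      rw [ha₀]
      exact hq
    rw [← hq', orbSetIrr_smul]
  · -- injective
    rintro ⟨χ₁⟩ ⟨χ₂⟩ h
    have hsets : orbSetIrr φ χ₁ = orbSetIrr φ χ₂ := congrArg Subtype.val h
    have hmem : (χ₁ : G → ℂ) ∈ orbSetIrr φ χ₂ := hsets ▸ self_mem_orbSetIrr φ χ₁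
    obtain ⟨a, ha⟩ := hmem
    apply Quotient.sound
    refine MulAction.mem_orbit_iff.mpr ⟨⟨φ a, ⟨a, rfl⟩⟩, ?_⟩
    show τ (φ a) χ₂ = χ₁
    exact Subtype.ext ha.symm
  · -- surjective
    rintro ⟨O, χ, hχ, rfl⟩
    exact ⟨⟦⟨χ, hχ⟩⟧, rfl⟩

lemma carrier_mk_eq (g : G) : ConjClasses.carrier (ConjClasses.mk g) = {h : G | IsConj g h} := by
  ext h
  rw [Set.mem_setOf_eq, ConjClasses.mem_carrier_iff_mk_eq, ConjClasses.mk_eq_mk_iff_isConj]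
  exact isConj_comm

lemma image_carrier (σ : MulAut G) (c : ConjClasses G) :
    ⇑σ '' ConjClasses.carrier c = ConjClasses.carrier (ConjClasses.map σ.toMonoidHom c) := by
  obtain ⟨g, rfl⟩ := ConjClasses.mk_surjective c
  ext h
  constructor
  · rintro ⟨y, hy, rfl⟩
    rw [ConjClasses.mem_carrier_iff_mk_eq] at hy ⊢
    show ConjClasses.mk (σ y) = ConjClasses.mk (σ g)
    rw [ConjClasses.mk_eq_mk_iff_isConj] at hy ⊢
    exact σ.toMonoidHom.map_isConj hy
  · intro hh
    rw [ConjClasses.mem_carrier_iff_mk_eq] at hh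
    have hh' : IsConj h (σ g) := by
      rw [← ConjClasses.mk_eq_mk_iff_isConj]
      exact hh
    refine ⟨σ⁻¹ h, ?_, by simp⟩
    rw [ConjClasses.mem_carrier_iff_mk_eq, ConjClasses.mk_eq_mk_iff_isConj]
    have := (σ⁻¹ : MulAut G).toMonoidHom.map_isConj hh'
    simpa using this

lemma carrier_inj {c₁ c₂ : ConjClasses G} (h : ConjClasses.carrier c₁ = ConjClasses.carrier c₂) :
    c₁ = c₂ := by
  obtain ⟨g, rfl⟩ := ConjClasses.mk_surjective c₁
  have : g ∈ ConjClasses.carrier c₂ := h ▸ ConjClasses.mem_carrier_mk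
  exact ConjClasses.mem_carrier_iff_mk_eq.mp this

def orbSetCl (c : ConjClasses G) : Set (Set G) :=
  {D : Set G | ∃ a : A, D = ⇑(φ a) '' ConjClasses.carrier c}

lemma self_mem_orbSetCl (c : ConjClasses G) : ConjClasses.carrier c ∈ orbSetCl φ c := by
  refine ⟨1, ?_⟩
  rw [map_one]
  ext h
  simp

lemma image_comp_aux (a b : A) (s : Set G) :
    ⇑(φ a) '' (⇑(φ b) '' s) = ⇑(φ (a * b)) '' s := by
  rw [Set.image_image]
  apply Set.image_congr'
  intro x
  rw [map_mul]
  rfl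

lemma orbSetCl_smul (a₀ : A) (c : ConjClasses G) :
    orbSetCl φ (ConjClasses.map (φ a₀).toMonoidHom c) = orbSetCl φ c := by
  ext D
  constructor
  · rintro ⟨a, rfl⟩
    refine ⟨a * a₀, ?_⟩
    rw [← image_carrier, image_comp_aux]
  · rintro ⟨a, rfl⟩
    refine ⟨a * a₀⁻¹, ?_⟩
    rw [← image_carrier, image_comp_aux]
    congr 2
    group

lemma natcard_cl :
    Nat.card {P : Set (Set G) | ∃ C : Set G, (∃ g : G, C = {h : G | IsConj g h}) ∧
        P = {D : Set G | ∃ a : A, D = ⇑(φ a) '' C}}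
      = Nat.card (Quotient (@orbitRel ↥φ.range (ConjClasses G) _ (actCl φ))) := by
  letI := actCl φ
  symm
  apply Nat.card_congr
  refine Equiv.ofBijective (Quotient.lift
    (fun c : ConjClasses G =>
      (⟨orbSetCl φ c, ⟨ConjClasses.carrier c,
        ⟨Quotient.out c, by
          conv_lhs => rw [show c = ConjClasses.mk (Quotient.out c) from (Quotient.out_eq c).symm]
          exact carrier_mk_eq _⟩, rfl⟩⟩ :
        ↥{P : Set (Set G) | ∃ C : Set G, (∃ g : G, C = {h : G | IsConj g h}) ∧
          P = {D : Set G | ∃ a : A, D = ⇑(φ a) '' C}})) ?_) ⟨?_, ?_⟩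
  · intro c₁ c₂ hrel
    obtain ⟨q, hq⟩ := MulAction.mem_orbit_iff.mp hrel
    obtain ⟨a₀, ha₀⟩ := q.2
    apply Subtype.ext
    show orbSetCl φ c₁ = orbSetCl φ c₂
    have hq' : ConjClasses.map (φ a₀).toMonoidHom c₂ = c₁ := by
      rw [ha₀]
      exact hq
    rw [← hq', orbSetCl_smul]
  · rintro ⟨c₁⟩ ⟨c₂⟩ h
    have hsets : orbSetCl φ c₁ = orbSetCl φ c₂ := congrArg Subtype.val h
    have hmem : ConjClasses.carrier c₁ ∈ orbSetCl φ c₂ := hsets ▸ self_mem_orbSetCl φ c₁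
    obtain ⟨a, ha⟩ := hmem
    apply Quotient.sound
    refine MulAction.mem_orbit_iff.mpr ⟨⟨φ a, ⟨a, rfl⟩⟩, ?_⟩
    show ConjClasses.map (φ a).toMonoidHom c₂ = c₁
    apply carrier_inj
    rw [← image_carrier]
    exact ha.symm
  · rintro ⟨P, C, ⟨g, rfl⟩, rfl⟩
    refine ⟨⟦ConjClasses.mk g⟧, ?_⟩
    apply Subtype.ext
    show orbSetCl φ (ConjClasses.mk g) = _
    unfold orbSetCl
    rw [carrier_mk_eq]

end Final


end BrauerAux2

end BrauerAux

end

/-- **Brauer Permutation Lemma applied to character theory (orbit count).**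
Let `G` be a finite group and let a group `A` act on `G` by automorphisms via
`φ : A →* MulAut G`.  `A` acts on the irreducible complex characters of `G` by
`(a • χ) g = χ ((φ a)⁻¹ g)` and on conjugacy classes by `a • C = (φ a) '' C`.
Then the number of `A`-orbits on the set of irreducible complex characters of
`G` equals the number of `A`-orbits on the set of conjugacy classes of `G`. -/
theorem stmt4 {G : Type} [Group G] [Fintype G] {A : Type*} [Group A]
    (φ : A →* MulAut G) :
    Nat.card {O : Set (G → ℂ) | ∃ χ : G → ℂ,
        (∃ V : FDRep ℂ G, CategoryTheory.Simple V ∧ χ = V.character) ∧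
        O = {ψ : G → ℂ | ∃ a : A, ψ = fun g : G => χ ((φ a)⁻¹ g)}}
      = Nat.card {P : Set (Set G) | ∃ C : Set G,
        (∃ g : G, C = {h : G | IsConj g h}) ∧
        P = {D : Set G | ∃ a : A, D = (φ a) '' C}} := by
  exact (BrauerAux.BrauerAux2.natcard_irr φ).trans
    ((BrauerAux.BrauerAux2.card_orbits_eq φ).trans (BrauerAux.BrauerAux2.natcard_cl φ).symm)
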